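/- Let x, y ∈ L¹(0,∞) be real-valued with ∫x = ∫y. Then x is majorized by y (i.e., x₊ is submajorized by y₊ and x₋ is submajorized by y₋) if and only if for every t ∈ ℝ, ∫(x - t)₊ dm ≤ ∫(y - t)₊ dm and ∫(-x - t)₊ dm ≤ ∫(-y - t)₊ dm. -/

import Mathlib

open MeasureTheory Set

/-- Decreasing rearrangement of `|f|` with respect to Lebesgue measure on `(0,∞)`. -/
noncomputable def rearr (f : ℝ → ℝ) (t : ℝ) : ℝ :=
  sInf {s : ℝ | 0 ≤ s ∧ (volume.restrict (Set.Ioi (0:ℝ))) {x | s < |f x|} ≤ ENNReal.ofReal t}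

/-- Positive part of a function. -/
noncomputable def posPart' (f : ℝ → ℝ) : ℝ → ℝ := fun t => max (f t) 0

/-- Negative part of a function. -/
noncomputable def negPart' (f : ℝ → ℝ) : ℝ → ℝ := fun t => max (-f t) 0

/-- Hardy–Littlewood–Pólya submajorization on `(0,∞)`. -/
def SubMaj (f g : ℝ → ℝ) : Prop :=
  ∀ t : ℝ, 0 ≤ t →
    (∫ s in Set.Ioc (0:ℝ) t, rearr f s) ≤ ∫ s in Set.Ioc (0:ℝ) t, rearr g s

/-- Hardy–Littlewood–Pólya majorization on `(0,∞)`: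
`f₊ ≺≺ g₊`, `f₋ ≺≺ g₋` and `∫ f = ∫ g`. -/
def Maj (f g : ℝ → ℝ) : Prop :=
  SubMaj (posPart' f) (posPart' g) ∧ SubMaj (negPart' f) (negPart' g) ∧
    (∫ t in Set.Ioi (0:ℝ), f t) = ∫ t in Set.Ioi (0:ℝ), g t

open scoped ENNReal NNReal

namespace StmtAux

/-- The reference measure: Lebesgue on `(0,∞)`. -/
noncomputable def nu : Measure ℝ := volume.restrict (Set.Ioi (0:ℝ))

/-- Distribution function of `|f|`. -/
noncomputable def dd (f : ℝ → ℝ) (s : ℝ) : ℝ≥0∞ := nu {x | s < |f x|}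

lemma rearr_eq (f : ℝ → ℝ) (r : ℝ) :
    rearr f r = sInf {s : ℝ | 0 ≤ s ∧ dd f s ≤ ENNReal.ofReal r} := rfl

lemma dd_antitone (f : ℝ → ℝ) : Antitone (dd f) := by
  intro s s' h
  exact measure_mono (fun x hx => lt_of_le_of_lt h hx)

lemma rearr_nonneg (f : ℝ → ℝ) (r : ℝ) : 0 ≤ rearr f r :=
  Real.sInf_nonneg (fun s hs => hs.1)

lemma dd_sup (f : ℝ → ℝ) (s : ℝ) :
    dd f s = ⨆ n : ℕ, dd f (s + 1 / (n + 1)) := by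
  have hset : {x : ℝ | s < |f x|} = ⋃ n : ℕ, {x : ℝ | s + 1 / (n + 1) < |f x|} := by
    ext x
    simp only [mem_setOf_eq, mem_iUnion]
    constructor
    · intro hx
      obtain ⟨n, hn⟩ := exists_nat_one_div_lt (sub_pos.2 hx)
      exact ⟨n, by linarith⟩
    · rintro ⟨n, hn⟩
      have : (0:ℝ) < 1 / (n + 1) := by positivity
      linarith
  have hmono : Monotone (fun n : ℕ => {x : ℝ | s + 1 / (n + 1) < |f x|}) := by
    intro m n hmn x hx
    have h1 : (1:ℝ) / (n + 1) ≤ 1 / (m + 1) := by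
      apply one_div_le_one_div_of_le (by positivity)
      exact_mod_cast by exact_mod_cast add_le_add_left (Nat.cast_le.2 hmn) 1
    simp only [mem_setOf_eq] at hx ⊢
    linarith
  rw [dd, hset]
  exact hmono.measure_iUnion

/-- Markov-type bound giving nonemptiness of the defining set of `rearr`. -/
lemma rearrSet_nonempty {f : ℝ → ℝ} (hf : IntegrableOn f (Set.Ioi 0)) {r : ℝ} (hr : 0 < r) :
    {s : ℝ | 0 ≤ s ∧ dd f s ≤ ENNReal.ofReal r}.Nonempty := by
  set I : ℝ≥0∞ := ∫⁻ u in Set.Ioi (0:ℝ), ENNReal.ofReal |f u| with hI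
  have hIfin : I < ⊤ := by
    have := hf.2
    rw [HasFiniteIntegral] at this
    simpa [← ofReal_norm_eq_enorm, Real.norm_eq_abs] using this
  have hmeas : AEMeasurable (fun u => ENNReal.ofReal |f u|) nu := by
    have := hf.aemeasurable.norm
    simp only [Real.norm_eq_abs] at this
    exact this.ennreal_ofReal
  refine ⟨I.toReal / r + 1, ⟨by positivity, ?_⟩⟩
  set s : ℝ := I.toReal / r + 1 with hs
  have hs0 : 0 < s := by positivity
  by_contra hcon
  have hlt : ENNReal.ofReal r < dd f s := lt_of_not_ge hcon
  have markov := mul_meas_ge_le_lintegral₀ hmeas (ENNReal.ofReal s)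
  have hsub : dd f s ≤ nu {x | ENNReal.ofReal s ≤ ENNReal.ofReal |f x|} := by
    apply measure_mono
    intro x hx
    exact ENNReal.ofReal_le_ofReal (le_of_lt hx)
  have h1 : ENNReal.ofReal s * ENNReal.ofReal r ≤ I := by
    calc ENNReal.ofReal s * ENNReal.ofReal r ≤ ENNReal.ofReal s * dd f s :=
          mul_le_mul_right hlt.le _
      _ ≤ ENNReal.ofReal s * nu {x | ENNReal.ofReal s ≤ ENNReal.ofReal |f x|} :=
          mul_le_mul_right hsub _
      _ ≤ I := markov
  have h2 : I < ENNReal.ofReal s * ENNReal.ofReal r := by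
    rw [← ENNReal.ofReal_mul hs0.le]
    have : I.toReal < s * r := by
      have : s * r = I.toReal + r := by
        rw [hs]; field_simp
      rw [this]; linarith
    calc I = ENNReal.ofReal I.toReal := (ENNReal.ofReal_toReal hIfin.ne).symm
      _ < ENNReal.ofReal (s * r) := by
          rw [ENNReal.ofReal_lt_ofReal_iff (by positivity)]; exact this
  exact absurd (lt_of_le_of_lt h1 h2) (lt_irrefl _)


lemma rearrSet_bddBelow (f : ℝ → ℝ) (r : ℝ) :
    BddBelow {s : ℝ | 0 ≤ s ∧ dd f s ≤ ENNReal.ofReal r} :=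
  ⟨0, fun s hs => hs.1⟩

/-- Key Galois-type characterization of the decreasing rearrangement. -/
lemma lt_rearr_iff {f : ℝ → ℝ} (hf : IntegrableOn f (Set.Ioi 0)) {r s : ℝ}
    (hr : 0 < r) (hs : 0 ≤ s) :
    s < rearr f r ↔ ENNReal.ofReal r < dd f s := by
  have hne := rearrSet_nonempty hf hr
  constructor
  · intro h
    by_contra hcon
    push_neg at hcon
    have : rearr f r ≤ s := csInf_le (rearrSet_bddBelow f r) ⟨hs, hcon⟩
    exact absurd h (not_lt.2 this)
  · intro h
    rw [dd_sup f s] at h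
    obtain ⟨n, hn⟩ := lt_iSup_iff.mp h
    have hstep : (0:ℝ) < 1 / (n + 1) := by positivity
    have : s + 1 / (n + 1) ≤ rearr f r := by
      apply le_csInf hne
      intro σ hσ
      by_contra hcon
      push_neg at hcon
      have : dd f (s + 1 / (n + 1)) ≤ dd f σ := dd_antitone f hcon.le
      exact absurd (lt_of_lt_of_le hn (this.trans hσ.2)) (lt_irrefl _)
    linarith

lemma lintegral_abs_lt_top {f : ℝ → ℝ} (hf : IntegrableOn f (Set.Ioi 0)) :
    (∫⁻ u in Set.Ioi (0:ℝ), ENNReal.ofReal |f u|) < ⊤ := by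
  have := hf.2
  rw [HasFiniteIntegral] at this
  simpa [← ofReal_norm_eq_enorm, Real.norm_eq_abs] using this

lemma abs_aemeasurable {f : ℝ → ℝ} (hf : IntegrableOn f (Set.Ioi 0)) :
    AEMeasurable (fun u => ENNReal.ofReal |f u|) nu := by
  have := hf.aemeasurable.norm
  simp only [Real.norm_eq_abs] at this
  exact this.ennreal_ofReal

lemma mul_dd_le {f : ℝ → ℝ} (hf : IntegrableOn f (Set.Ioi 0)) (s : ℝ) :
    ENNReal.ofReal s * dd f s ≤ ∫⁻ u in Set.Ioi (0:ℝ), ENNReal.ofReal |f u| := by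
  have markov := mul_meas_ge_le_lintegral₀ (abs_aemeasurable hf) (ENNReal.ofReal s)
  refine le_trans ?_ markov
  apply mul_le_mul_right
  apply measure_mono
  intro x hx
  exact ENNReal.ofReal_le_ofReal (le_of_lt hx)

lemma dd_lt_top {f : ℝ → ℝ} (hf : IntegrableOn f (Set.Ioi 0)) {t : ℝ} (ht : 0 < t) :
    dd f t < ⊤ := by
  by_contra hcon
  push_neg at hcon
  have h1 := mul_dd_le hf t
  rw [top_le_iff.1 hcon, ENNReal.mul_top (by simp [ENNReal.ofReal_eq_zero, not_le, ht])] at h1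
  exact absurd (lt_of_le_of_lt h1 (lintegral_abs_lt_top hf)) (lt_irrefl _)

lemma rearr_antitoneOn {f : ℝ → ℝ} (hf : IntegrableOn f (Set.Ioi 0)) :
    AntitoneOn (rearr f) (Set.Ioi 0) := by
  intro r hr r' hr' hle
  rw [rearr_eq, rearr_eq]
  apply csInf_le_csInf (rearrSet_bddBelow f r')
    (rearrSet_nonempty hf hr)
  intro s hs
  exact ⟨hs.1, hs.2.trans (ENNReal.ofReal_le_ofReal hle)⟩

/-- Equimeasurability of `rearr f` with `|f|`. -/
lemma meas_rearr {f : ℝ → ℝ} (hf : IntegrableOn f (Set.Ioi 0)) {s : ℝ} (hs : 0 ≤ s) :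
    nu {r : ℝ | s < rearr f r} = dd f s := by
  rw [nu, Measure.restrict_apply' measurableSet_Ioi]
  by_cases hfin : dd f s = ⊤
  · have : {r : ℝ | s < rearr f r} ∩ Set.Ioi 0 = Set.Ioi 0 := by
      apply inter_eq_right.2
      intro r hr
      rw [mem_setOf_eq, lt_rearr_iff hf hr hs, hfin]
      exact ENNReal.ofReal_lt_top
    rw [this, hfin, Real.volume_Ioi]
  · have hset : {r : ℝ | s < rearr f r} ∩ Set.Ioi 0 = Set.Ioo 0 (dd f s).toReal := by
      ext r
      simp only [mem_inter_iff, mem_setOf_eq, mem_Ioi, mem_Ioo]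
      constructor
      · rintro ⟨h1, h2⟩
        refine ⟨h2, ?_⟩
        rw [lt_rearr_iff hf h2 hs] at h1
        rwa [ENNReal.ofReal_lt_iff_lt_toReal (le_of_lt h2) hfin] at h1
      · rintro ⟨h1, h2⟩
        refine ⟨?_, h1⟩
        rw [lt_rearr_iff hf h1 hs, ENNReal.ofReal_lt_iff_lt_toReal (le_of_lt h1) hfin]
        exact h2
    rw [hset, Real.volume_Ioo, sub_zero, ENNReal.ofReal_toReal hfin]


lemma rearr_aemeasurable {f : ℝ → ℝ} (hf : IntegrableOn f (Set.Ioi 0)) :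
    AEMeasurable (rearr f) nu :=
  aemeasurable_restrict_of_antitoneOn measurableSet_Ioi (rearr_antitoneOn hf)

/-- `Ψ f t = ∫⁻ (rearr f - t)₊`. -/
noncomputable def Psi (f : ℝ → ℝ) (t : ℝ) : ℝ≥0∞ :=
  ∫⁻ s in Set.Ioi (0:ℝ), ENNReal.ofReal (max (rearr f s - t) 0)

/-- `Φ f u = ∫⁻_{(0,u]} rearr f`. -/
noncomputable def Phi (f : ℝ → ℝ) (u : ℝ) : ℝ≥0∞ :=
  ∫⁻ s in Set.Ioc (0:ℝ) u, ENNReal.ofReal (rearr f s)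

/-- Layer-cake / equimeasurability: `∫⁻ (f - t)₊ = ∫⁻ (rearr f - t)₊` for nonneg `f`. -/
lemma lint_eq {f : ℝ → ℝ} (hf : IntegrableOn f (Set.Ioi 0)) (hfnn : ∀ u, 0 ≤ f u)
    {t : ℝ} (ht : 0 ≤ t) :
    (∫⁻ u in Set.Ioi (0:ℝ), ENNReal.ofReal (max (f u - t) 0)) = Psi f t := by
  have h1 : (∫⁻ u in Set.Ioi (0:ℝ), ENNReal.ofReal (max (f u - t) 0))
      = ∫⁻ s in Set.Ioi (0:ℝ), nu {u : ℝ | s < max (f u - t) 0} := by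
    apply lintegral_eq_lintegral_meas_lt nu
      (Filter.Eventually.of_forall (fun u => le_max_right _ _))
    exact (hf.aemeasurable.sub_const t).max aemeasurable_const
  have h2 : Psi f t = ∫⁻ s in Set.Ioi (0:ℝ), nu {r : ℝ | s < max (rearr f r - t) 0} := by
    apply lintegral_eq_lintegral_meas_lt nu
      (Filter.Eventually.of_forall (fun u => le_max_right _ _))
    exact ((rearr_aemeasurable hf).sub_const t).max aemeasurable_const
  rw [h1, h2]
  apply setLIntegral_congr_fun measurableSet_Ioi
  intro s hs
  have hs' : (0:ℝ) < s := hs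
  have hts : 0 ≤ t + s := by linarith
  have e1 : {u : ℝ | s < max (f u - t) 0} = {u : ℝ | t + s < |f u|} := by
    ext u
    simp only [mem_setOf_eq, lt_max_iff, abs_of_nonneg (hfnn u)]
    constructor
    · rintro (h | h)
      · linarith
      · exact absurd h (not_lt.2 hs'.le)
    · intro h; left; linarith
  have e2 : {r : ℝ | s < max (rearr f r - t) 0} = {r : ℝ | t + s < rearr f r} := by
    ext r
    simp only [mem_setOf_eq, lt_max_iff]
    constructor
    · rintro (h | h)
      · linarith
      · exact absurd h (not_lt.2 hs'.le)
    · intro h; left; linarith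
  beta_reduce
  rw [e1, e2, meas_rearr hf hts]
  rfl


lemma Psi_zero_eq (f : ℝ → ℝ) :
    Psi f 0 = ∫⁻ s in Set.Ioi (0:ℝ), ENNReal.ofReal (rearr f s) := by
  unfold Psi
  congr 1
  ext s
  rw [sub_zero, max_eq_left (rearr_nonneg f s)]

lemma Psi_lt_top {f : ℝ → ℝ} (hf : IntegrableOn f (Set.Ioi 0)) (hfnn : ∀ u, 0 ≤ f u) :
    Psi f 0 < ⊤ := by
  rw [← lint_eq hf hfnn le_rfl]
  apply lt_of_le_of_lt _ (lintegral_abs_lt_top hf)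
  apply lintegral_mono
  intro u
  apply ENNReal.ofReal_le_ofReal
  rw [sub_zero, abs_of_nonneg (hfnn u)]
  exact max_le le_rfl (hfnn u)

lemma Psi_le_Psi_zero {f : ℝ → ℝ} {t : ℝ} (ht : 0 ≤ t) : Psi f t ≤ Psi f 0 := by
  rw [Psi_zero_eq]
  apply lintegral_mono
  intro s
  apply ENNReal.ofReal_le_ofReal
  exact max_le (by linarith [rearr_nonneg f s]) (rearr_nonneg f s)

lemma Phi_le_Psi_zero (f : ℝ → ℝ) (u : ℝ) : Phi f u ≤ Psi f 0 := by
  rw [Psi_zero_eq]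
  exact lintegral_mono_set Ioc_subset_Ioi_self

lemma Phi_lt_top {f : ℝ → ℝ} (hf : IntegrableOn f (Set.Ioi 0)) (hfnn : ∀ u, 0 ≤ f u)
    (u : ℝ) : Phi f u < ⊤ :=
  lt_of_le_of_lt (Phi_le_Psi_zero f u) (Psi_lt_top hf hfnn)

lemma lint_Ioi_eq_iSup {h : ℝ → ℝ≥0∞} (hm : AEMeasurable h nu) :
    (∫⁻ s in Set.Ioi (0:ℝ), h s) = ⨆ n : ℕ, ∫⁻ s in Set.Ioc (0:ℝ) (n:ℝ), h s := by
  have key : ∀ n : ℕ, (∫⁻ s, (Set.Ioc (0:ℝ) (n:ℝ)).indicator h s ∂nu)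
      = ∫⁻ s in Set.Ioc (0:ℝ) (n:ℝ), h s := by
    intro n
    rw [lintegral_indicator measurableSet_Ioc, nu, Measure.restrict_restrict measurableSet_Ioc,
      Set.Ioc_inter_Ioi, sup_of_le_left le_rfl]
  have hmono : ∀ᵐ s ∂nu, Monotone (fun n : ℕ => (Set.Ioc (0:ℝ) (n:ℝ)).indicator h s) := by
    apply Filter.Eventually.of_forall
    intro s m n hmn
    exact Set.indicator_le_indicator_of_subset
      (Set.Ioc_subset_Ioc le_rfl (Nat.cast_le.2 hmn)) (fun _ => zero_le) s
  have hlim : ∀ᵐ s ∂nu, (⨆ n : ℕ, (Set.Ioc (0:ℝ) (n:ℝ)).indicator h s) = h s := by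
    rw [nu, ae_restrict_iff' measurableSet_Ioi]
    apply Filter.Eventually.of_forall
    intro s hs
    obtain ⟨n, hn⟩ := exists_nat_ge s
    apply le_antisymm
    · exact iSup_le fun m => Set.indicator_le_self _ _ s
    · calc h s = (Set.Ioc (0:ℝ) (n:ℝ)).indicator h s := by
            rw [Set.indicator_of_mem (Set.mem_Ioc.mpr ⟨hs, hn⟩)]
        _ ≤ _ := le_iSup (fun n : ℕ => (Set.Ioc (0:ℝ) (n:ℝ)).indicator h s) n
  calc (∫⁻ s in Set.Ioi (0:ℝ), h s) = ∫⁻ s, h s ∂nu := rfl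
    _ = ∫⁻ s, ⨆ n : ℕ, (Set.Ioc (0:ℝ) (n:ℝ)).indicator h s ∂nu :=
        (lintegral_congr_ae hlim).symm
    _ = ⨆ n : ℕ, ∫⁻ s, (Set.Ioc (0:ℝ) (n:ℝ)).indicator h s ∂nu :=
        lintegral_iSup' (fun n => hm.indicator measurableSet_Ioc) hmono
    _ = ⨆ n : ℕ, ∫⁻ s in Set.Ioc (0:ℝ) (n:ℝ), h s := by
        exact iSup_congr key


lemma lint_restrict {A : Set ℝ} (hA : MeasurableSet A) (hAsub : A ⊆ Set.Ioi 0)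
    {h : ℝ → ℝ≥0∞} (h0 : ∀ r, r ∈ Set.Ioi (0:ℝ) → r ∉ A → h r = 0) :
    (∫⁻ r in Set.Ioi (0:ℝ), h r) = ∫⁻ r in A, h r := by
  calc (∫⁻ r in Set.Ioi (0:ℝ), h r) = ∫⁻ r in Set.Ioi (0:ℝ), A.indicator h r := by
        apply setLIntegral_congr_fun measurableSet_Ioi
        intro r hr
        by_cases hrA : r ∈ A
        · rw [Set.indicator_of_mem hrA]
        · rw [Set.indicator_of_notMem hrA, h0 r hr hrA]
    _ = ∫⁻ r in A, h r := by
        have e : (∫⁻ r, A.indicator h r ∂nu) = ∫⁻ r in A, h r ∂nu := lintegral_indicator hA h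
        rw [nu, Measure.restrict_restrict hA, Set.inter_eq_left.2 hAsub] at e
        exact e

/-- Forward: partial-sum domination implies domination of `∫ (· - t)₊`. -/
lemma Psi_mono {f g : ℝ → ℝ} (hf : IntegrableOn f (Set.Ioi 0)) (hg : IntegrableOn g (Set.Ioi 0))
    (hgnn : ∀ u, 0 ≤ g u)
    (h : ∀ u, 0 ≤ u → Phi f u ≤ Phi g u) {t : ℝ} (ht : 0 ≤ t) :
    Psi f t ≤ Psi g t := by
  rcases eq_or_lt_of_le ht with rfl | htpos
  · -- t = 0
    rw [Psi_zero_eq f, lint_Ioi_eq_iSup ((rearr_aemeasurable hf).ennreal_ofReal)]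
    apply iSup_le
    intro n
    calc (∫⁻ s in Set.Ioc (0:ℝ) (n:ℝ), ENNReal.ofReal (rearr f s)) = Phi f n := rfl
      _ ≤ Phi g n := h n (Nat.cast_nonneg n)
      _ ≤ Psi g 0 := Phi_le_Psi_zero g n
  · -- t > 0
    set a : ℝ := (dd f t).toReal with ha
    have ha0 : 0 ≤ a := ENNReal.toReal_nonneg
    have hddfin : dd f t ≠ ⊤ := (dd_lt_top hf htpos).ne
    have hFgt : ∀ r : ℝ, 0 < r → (t < rearr f r ↔ r < a) := by
      intro r hr
      rw [lt_rearr_iff hf hr ht, ha, ENNReal.ofReal_lt_iff_lt_toReal hr.le hddfin]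
    set c : ℝ≥0∞ := ENNReal.ofReal t with hc
    set H : ℝ → ℝ≥0∞ := fun r => ENNReal.ofReal (max (rearr f r - t) 0) with hH
    have e1 : Psi f t = ∫⁻ r in Set.Ioo 0 a, H r := by
      apply lint_restrict measurableSet_Ioo Ioo_subset_Ioi_self
      intro r hr hrA
      have hra : ¬ r < a := fun hlt => hrA ⟨hr, hlt⟩
      have : ¬ t < rearr f r := fun hlt => hra ((hFgt r hr).1 hlt)
      push_neg at this
      have e : max (rearr f r - t) 0 = 0 := max_eq_right (by linarith)
      rw [e, ENNReal.ofReal_zero]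
    have key1 : Psi f t + c * ENNReal.ofReal a ≤ Phi f a := by
      rw [e1]
      have : c * ENNReal.ofReal a = ∫⁻ _ in Set.Ioo (0:ℝ) a, c := by
        rw [setLIntegral_const, Real.volume_Ioo, sub_zero]
      rw [this, ← lintegral_add_right _ measurable_const]
      calc (∫⁻ r in Set.Ioo (0:ℝ) a, (H r + c))
          ≤ ∫⁻ r in Set.Ioo (0:ℝ) a, ENNReal.ofReal (rearr f r) := by
            apply setLIntegral_mono' measurableSet_Ioo
            intro r hr
            have hlt : t < rearr f r := (hFgt r hr.1).2 hr.2
            rw [hH, hc]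
            simp only
            rw [← ENNReal.ofReal_add (le_max_right _ _) ht]
            apply ENNReal.ofReal_le_ofReal
            rw [max_eq_left (by linarith)]
            linarith
        _ ≤ Phi f a := lintegral_mono_set Ioo_subset_Ioc_self
    have key3 : Phi g a ≤ Psi g t + c * ENNReal.ofReal a := by
      set Hg : ℝ → ℝ≥0∞ := fun r => ENNReal.ofReal (max (rearr g r - t) 0) with hHg
      calc Phi g a ≤ ∫⁻ r in Set.Ioc (0:ℝ) a, (Hg r + c) := by
            apply setLIntegral_mono' measurableSet_Ioc
            intro r _
            rw [hHg, hc]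
            simp only
            rw [← ENNReal.ofReal_add (le_max_right _ _) ht]
            apply ENNReal.ofReal_le_ofReal
            calc rearr g r ≤ max (rearr g r - t) 0 + t := by
                  rcases le_total (rearr g r - t) 0 with h' | h'
                  · rw [max_eq_right h']; linarith
                  · rw [max_eq_left h']; linarith
              _ = _ := rfl
        _ = (∫⁻ r in Set.Ioc (0:ℝ) a, Hg r) + c * ENNReal.ofReal a := by
            rw [lintegral_add_right _ measurable_const, setLIntegral_const, Real.volume_Ioc,
              sub_zero, mul_comm]
        _ ≤ Psi g t + c * ENNReal.ofReal a := by
            apply add_le_add_left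
            exact lintegral_mono_set Ioc_subset_Ioi_self
    have hfin : c * ENNReal.ofReal a ≠ ⊤ := by
      exact ENNReal.mul_ne_top ENNReal.ofReal_ne_top ENNReal.ofReal_ne_top
    have := (key1.trans (h a ha0)).trans key3
    exact (ENNReal.add_le_add_iff_right hfin).1 this

/-- Backward: domination of `∫ (· - t)₊` implies partial-sum domination. -/
lemma Phi_mono {f g : ℝ → ℝ} (hf : IntegrableOn f (Set.Ioi 0)) (hg : IntegrableOn g (Set.Ioi 0))
    (h : ∀ t : ℝ, 0 ≤ t → Psi f t ≤ Psi g t) {u : ℝ} (hu : 0 ≤ u) :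
    Phi f u ≤ Phi g u := by
  rcases eq_or_lt_of_le hu with rfl | hupos
  · rw [Phi, Phi, Set.Ioc_self, Measure.restrict_empty]
    simp [lintegral_zero_measure]
  · set t : ℝ := rearr g u with htdef
    have ht : 0 ≤ t := rearr_nonneg g u
    set c : ℝ≥0∞ := ENNReal.ofReal t with hc
    set Hf : ℝ → ℝ≥0∞ := fun r => ENNReal.ofReal (max (rearr f r - t) 0) with hHf
    set Hg : ℝ → ℝ≥0∞ := fun r => ENNReal.ofReal (max (rearr g r - t) 0) with hHg
    have step1 : Phi f u ≤ Psi f t + c * ENNReal.ofReal u := by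
      calc Phi f u ≤ ∫⁻ r in Set.Ioc (0:ℝ) u, (Hf r + c) := by
            apply setLIntegral_mono' measurableSet_Ioc
            intro r _
            rw [hHf, hc]
            simp only
            rw [← ENNReal.ofReal_add (le_max_right _ _) ht]
            apply ENNReal.ofReal_le_ofReal
            rcases le_total (rearr f r - t) 0 with h' | h'
            · rw [max_eq_right h']; linarith
            · rw [max_eq_left h']; linarith
        _ = (∫⁻ r in Set.Ioc (0:ℝ) u, Hf r) + c * ENNReal.ofReal u := by
            rw [lintegral_add_right _ measurable_const, setLIntegral_const, Real.volume_Ioc,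
              sub_zero, mul_comm]
        _ ≤ Psi f t + c * ENNReal.ofReal u := by
            apply add_le_add_left
            exact lintegral_mono_set Ioc_subset_Ioi_self
    have step2 : Psi g t + c * ENNReal.ofReal u = Phi g u := by
      have e1 : Psi g t = ∫⁻ r in Set.Ioc (0:ℝ) u, Hg r := by
        apply lint_restrict measurableSet_Ioc Ioc_subset_Ioi_self
        intro r hr hrA
        have hur : u < r := by
          by_contra hcon
          push_neg at hcon
          exact hrA ⟨hr, hcon⟩
        have hle : rearr g r ≤ rearr g u := rearr_antitoneOn hg hupos (hupos.trans hur) hur.le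
        have e : max (rearr g r - t) 0 = 0 := max_eq_right (by rw [htdef]; linarith)
        rw [e, ENNReal.ofReal_zero]
      rw [e1]
      have : c * ENNReal.ofReal u = ∫⁻ _ in Set.Ioc (0:ℝ) u, c := by
        rw [setLIntegral_const, Real.volume_Ioc, sub_zero]
      rw [this, ← lintegral_add_right _ measurable_const]
      apply setLIntegral_congr_fun measurableSet_Ioc
      intro r hr
      have hle : t ≤ rearr g r := by
        rw [htdef]
        exact rearr_antitoneOn hg hr.1 (lt_of_lt_of_le hr.1 hr.2 |> fun h' => hupos) hr.2
      rw [hHg, hc]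
      simp only
      rw [max_eq_left (by linarith), ← ENNReal.ofReal_add (by linarith) ht, sub_add_cancel]
    calc Phi f u ≤ Psi f t + c * ENNReal.ofReal u := step1
      _ ≤ Psi g t + c * ENNReal.ofReal u := add_le_add_left (h t ht) _
      _ = Phi g u := step2


lemma integral_rearr_eq {f : ℝ → ℝ} (hf : IntegrableOn f (Set.Ioi 0)) (u : ℝ) :
    (∫ s in Set.Ioc (0:ℝ) u, rearr f s) = (Phi f u).toReal := by
  rw [integral_eq_lintegral_of_nonneg_ae
    (Filter.Eventually.of_forall (fun s => rearr_nonneg f s))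
    (((rearr_aemeasurable hf).mono_measure
      (Measure.restrict_mono Set.Ioc_subset_Ioi_self le_rfl)).aestronglyMeasurable)]
  rfl

lemma subMaj_iff {f g : ℝ → ℝ} (hf : IntegrableOn f (Set.Ioi 0)) (hg : IntegrableOn g (Set.Ioi 0))
    (hfnn : ∀ u, 0 ≤ f u) (hgnn : ∀ u, 0 ≤ g u) :
    SubMaj f g ↔ ∀ u : ℝ, 0 ≤ u → Phi f u ≤ Phi g u := by
  constructor
  · intro h u hu
    have := h u hu
    rw [integral_rearr_eq hf, integral_rearr_eq hg] at this
    exact (ENNReal.toReal_le_toReal (Phi_lt_top hf hfnn u).ne (Phi_lt_top hg hgnn u).ne).1 this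
  · intro h u hu
    rw [integral_rearr_eq hf, integral_rearr_eq hg]
    exact ENNReal.toReal_mono (Phi_lt_top hg hgnn u).ne (h u hu)

lemma max_sub_posPart (x : ℝ → ℝ) {t : ℝ} (ht : 0 ≤ t) (s : ℝ) :
    max (x s - t) 0 = max (posPart' x s - t) 0 := by
  rw [posPart']
  rcases le_total (x s) 0 with h' | h'
  · rw [max_eq_right h', max_eq_right (by linarith), max_eq_right (by linarith)]
  · rw [max_eq_left h']

lemma integral_posPart_eq {x : ℝ → ℝ} (hx : IntegrableOn x (Set.Ioi 0)) {t : ℝ} (ht : 0 ≤ t) :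
    (∫ s in Set.Ioi (0:ℝ), max (x s - t) 0) = (Psi (posPart' x) t).toReal := by
  have h1 := integral_eq_lintegral_of_nonneg_ae (μ := volume.restrict (Set.Ioi (0:ℝ)))
    (f := fun s => max (x s - t) 0)
    (Filter.Eventually.of_forall (fun s => le_max_right _ _))
    ((hx.aemeasurable.sub_const t).max aemeasurable_const).aestronglyMeasurable
  rw [h1]
  congr 1
  have e : ∀ s : ℝ, ENNReal.ofReal (max (x s - t) 0)
      = ENNReal.ofReal (max (posPart' x s - t) 0) := fun s => by rw [max_sub_posPart x ht s]
  calc (∫⁻ s in Set.Ioi (0:ℝ), ENNReal.ofReal (max (x s - t) 0))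
      = ∫⁻ s in Set.Ioi (0:ℝ), ENNReal.ofReal (max (posPart' x s - t) 0) := by
        exact lintegral_congr (fun s => e s)
    _ = Psi (posPart' x) t := lint_eq hx.pos_part (fun u => le_max_right _ _) ht

lemma Psi_t_lt_top {f : ℝ → ℝ} (hf : IntegrableOn f (Set.Ioi 0)) (hfnn : ∀ u, 0 ≤ f u)
    {t : ℝ} (ht : 0 ≤ t) : Psi f t < ⊤ :=
  lt_of_le_of_lt (Psi_le_Psi_zero ht) (Psi_lt_top hf hfnn)

/-- For `t < 0`, `(x - t)₊` is not integrable on `(0,∞)`, so its integral is `0`. -/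
lemma integral_neg_t_eq_zero {x : ℝ → ℝ} (hx : IntegrableOn x (Set.Ioi 0)) {t : ℝ} (ht : t < 0) :
    (∫ s in Set.Ioi (0:ℝ), max (x s - t) 0) = 0 := by
  apply integral_undef
  intro hcon
  set τ : ℝ := -t with hτ
  have hτpos : 0 < τ := by rw [hτ]; linarith
  have hτ2 : (0:ℝ) < τ / 2 := by linarith
  have hfin : (∫⁻ s in Set.Ioi (0:ℝ), ENNReal.ofReal (max (x s - t) 0)) < ⊤ := by
    have h2 := hcon.2
    rw [hasFiniteIntegral_iff_ofReal (μ := volume.restrict (Set.Ioi (0:ℝ)))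
      (f := fun s => max (x s - t) 0)
      (Filter.Eventually.of_forall (fun s => le_max_right _ _))] at h2
    exact h2
  -- the set where `x > -τ/2` has infinite measure
  have hAc : nu {s : ℝ | x s ≤ -(τ/2)} < ⊤ := by
    have markov := mul_meas_ge_le_lintegral₀ (abs_aemeasurable hx) (ENNReal.ofReal (τ/2))
    have hsub : nu {s : ℝ | x s ≤ -(τ/2)} ≤ nu {s : ℝ | ENNReal.ofReal (τ/2) ≤ ENNReal.ofReal |x s|} := by
      apply measure_mono
      intro s hs
      simp only [mem_setOf_eq] at hs ⊢
      apply ENNReal.ofReal_le_ofReal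
      calc τ / 2 ≤ -x s := by linarith
        _ ≤ |x s| := neg_le_abs _
    have h3 : ENNReal.ofReal (τ/2) * nu {s : ℝ | x s ≤ -(τ/2)} < ⊤ :=
      lt_of_le_of_lt (le_trans (mul_le_mul_right hsub _) markov) (lintegral_abs_lt_top hx)
    by_contra hcontop
    push_neg at hcontop
    rw [top_le_iff.1 hcontop, ENNReal.mul_top
      (by simp [ENNReal.ofReal_eq_zero, not_le, hτ2])] at h3
    exact absurd h3 (lt_irrefl _)
  -- hence the complementary set has infinite measure
  have hA : nu {s : ℝ | -(τ/2) < x s} = ⊤ := by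
    by_contra hcontop
    have huniv : (Set.univ : Set ℝ) ⊆ {s : ℝ | x s ≤ -(τ/2)} ∪ {s : ℝ | -(τ/2) < x s} := by
      intro s _
      rcases le_or_gt (x s) (-(τ/2)) with h' | h'
      · exact Or.inl h'
      · exact Or.inr h'
    have : nu Set.univ ≤ nu {s : ℝ | x s ≤ -(τ/2)} + nu {s : ℝ | -(τ/2) < x s} :=
      le_trans (measure_mono huniv) (measure_union_le _ _)
    rw [nu, Measure.restrict_apply_univ, Real.volume_Ioi] at this
    exact absurd this (not_le.2 (ENNReal.add_lt_top.2 ⟨hAc, lt_top_iff_ne_top.2 hcontop⟩))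
  -- Markov on the integrand gives infinite integral, contradiction
  have markov2 := mul_meas_ge_le_lintegral₀
    (f := fun s => ENNReal.ofReal (max (x s - t) 0)) (μ := nu)
    (((hx.aemeasurable.sub_const t).max aemeasurable_const).ennreal_ofReal)
    (ENNReal.ofReal (τ/2))
  have hsub2 : {s : ℝ | -(τ/2) < x s} ⊆
      {s : ℝ | ENNReal.ofReal (τ/2) ≤ ENNReal.ofReal (max (x s - t) 0)} := by
    intro s hs
    simp only [mem_setOf_eq] at hs ⊢
    apply ENNReal.ofReal_le_ofReal
    have : τ / 2 ≤ x s - t := by rw [hτ] at *; linarith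
    exact le_trans this (le_max_left _ _)
  have : (⊤ : ℝ≥0∞) ≤ ∫⁻ s in Set.Ioi (0:ℝ), ENNReal.ofReal (max (x s - t) 0) := by
    refine le_trans ?_ markov2
    rw [show nu {s : ℝ | ENNReal.ofReal (τ/2) ≤ ENNReal.ofReal (max (x s - t) 0)} = ⊤ from
      top_le_iff.1 (hA ▸ measure_mono hsub2), ENNReal.mul_top
      (by simp [ENNReal.ofReal_eq_zero, not_le, hτ2])]
  exact absurd (lt_of_le_of_lt this hfin) (lt_irrefl _)


lemma integral_negPart_eq {x : ℝ → ℝ} (hx : IntegrableOn x (Set.Ioi 0)) {t : ℝ} (ht : 0 ≤ t) :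
    (∫ s in Set.Ioi (0:ℝ), max (-x s - t) 0) = (Psi (negPart' x) t).toReal := by
  have h := integral_posPart_eq (x := fun s => -x s) hx.neg ht
  exact h

lemma integral_neg_t_eq_zero' {x : ℝ → ℝ} (hx : IntegrableOn x (Set.Ioi 0)) {t : ℝ} (ht : t < 0) :
    (∫ s in Set.Ioi (0:ℝ), max (-x s - t) 0) = 0 :=
  integral_neg_t_eq_zero (x := fun s => -x s) hx.neg ht

end StmtAux

/-- For `x, y ∈ L¹(0,∞)` with `∫x = ∫y`: `x ≺ y` iff for every `t ∈ ℝ`,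
`∫(x-t)₊ ≤ ∫(y-t)₊` and `∫(-x-t)₊ ≤ ∫(-y-t)₊`. -/
theorem stmt5 (x y : ℝ → ℝ) (hx : IntegrableOn x (Set.Ioi 0))
    (hy : IntegrableOn y (Set.Ioi 0))
    (hInt : (∫ t in Set.Ioi (0:ℝ), x t) = ∫ t in Set.Ioi (0:ℝ), y t) :
    (SubMaj (posPart' x) (posPart' y) ∧ SubMaj (negPart' x) (negPart' y)) ↔
      (∀ t : ℝ,
        (∫ s in Set.Ioi (0:ℝ), max (x s - t) 0) ≤ (∫ s in Set.Ioi (0:ℝ), max (y s - t) 0) ∧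
        (∫ s in Set.Ioi (0:ℝ), max (-x s - t) 0) ≤ ∫ s in Set.Ioi (0:ℝ), max (-y s - t) 0) := by
  open StmtAux in
  have hxp : IntegrableOn (posPart' x) (Set.Ioi 0) := hx.pos_part
  have hyp : IntegrableOn (posPart' y) (Set.Ioi 0) := hy.pos_part
  have hxn : IntegrableOn (negPart' x) (Set.Ioi 0) := hx.neg.pos_part
  have hyn : IntegrableOn (negPart' y) (Set.Ioi 0) := hy.neg.pos_part
  have hxpnn : ∀ u, 0 ≤ posPart' x u := fun u => le_max_right _ _
  have hypnn : ∀ u, 0 ≤ posPart' y u := fun u => le_max_right _ _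
  have hxnnn : ∀ u, 0 ≤ negPart' x u := fun u => le_max_right _ _
  have hynnn : ∀ u, 0 ≤ negPart' y u := fun u => le_max_right _ _
  constructor
  · rintro ⟨h1, h2⟩ t
    rcases le_or_gt 0 t with ht | ht
    · constructor
      · rw [StmtAux.integral_posPart_eq hx ht, StmtAux.integral_posPart_eq hy ht]
        apply ENNReal.toReal_mono (StmtAux.Psi_t_lt_top hyp hypnn ht).ne
        exact StmtAux.Psi_mono hxp hyp hypnn
          ((StmtAux.subMaj_iff hxp hyp hxpnn hypnn).1 h1) ht
      · rw [StmtAux.integral_negPart_eq hx ht, StmtAux.integral_negPart_eq hy ht]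
        apply ENNReal.toReal_mono (StmtAux.Psi_t_lt_top hyn hynnn ht).ne
        exact StmtAux.Psi_mono hxn hyn hynnn
          ((StmtAux.subMaj_iff hxn hyn hxnnn hynnn).1 h2) ht
    · constructor
      · rw [StmtAux.integral_neg_t_eq_zero hx ht, StmtAux.integral_neg_t_eq_zero hy ht]
      · rw [StmtAux.integral_neg_t_eq_zero' hx ht, StmtAux.integral_neg_t_eq_zero' hy ht]
  · intro h
    constructor
    · apply (StmtAux.subMaj_iff hxp hyp hxpnn hypnn).2
      intro u hu
      apply StmtAux.Phi_mono hxp hyp _ hu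
      intro t ht
      have := (h t).1
      rw [StmtAux.integral_posPart_eq hx ht, StmtAux.integral_posPart_eq hy ht] at this
      exact (ENNReal.toReal_le_toReal (StmtAux.Psi_t_lt_top hxp hxpnn ht).ne
        (StmtAux.Psi_t_lt_top hyp hypnn ht).ne).1 this
    · apply (StmtAux.subMaj_iff hxn hyn hxnnn hynnn).2
      intro u hu
      apply StmtAux.Phi_mono hxn hyn _ hu
      intro t ht
      have := (h t).2
      rw [StmtAux.integral_negPart_eq hx ht, StmtAux.integral_negPart_eq hy ht] at this
      exact (ENNReal.toReal_le_toReal (StmtAux.Psi_t_lt_top hxn hxnnn ht).ne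
        (StmtAux.Psi_t_lt_top hyn hynnn ht).ne).1 this
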